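/- Let H : ℝ^n → ℝ^D be injective and locally Lipschitz, and define s : {(x,y) ∈ ℝ^n × ℝ^n : x ≠ y} → S^{D−1} by s(x,y) = (H(x) − H(y))/‖H(x) − H(y)‖. Then the image of s, as a subset of the unit sphere S^{D−1} ⊂ ℝ^D, has Hausdorff dimension at most 2n. In particular, if D − 1 > 2n, the image of s has empty interior in S^{D−1}. -/

import Mathlib

open Set Module Metric
open scoped ENNReal NNReal

set_option maxHeartbeats 1000000

/-- **Hausdorff dimension of the secant direction set**: if `H : ℝ^n → ℝ^D` is injective
and locally Lipschitz, the set of normalized secant directions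
`s(x,y) = (H x − H y)/‖H x − H y‖` has Hausdorff dimension at most `2n`; in particular if
`D − 1 > 2n` it has empty interior in the unit sphere `S^{D−1}`. -/
theorem secant_directions_dimH_le {n D : ℕ}
    (H : EuclideanSpace ℝ (Fin n) → EuclideanSpace ℝ (Fin D))
    (hinj : Function.Injective H) (hlip : LocallyLipschitz H) :
    dimH {v : EuclideanSpace ℝ (Fin D) |
        ∃ x y, x ≠ y ∧ v = ‖H x - H y‖⁻¹ • (H x - H y)} ≤ 2 * n ∧
    (2 * n < D - 1 →
      interior
        ((fun v : Metric.sphere (0 : EuclideanSpace ℝ (Fin D)) 1 => (v : EuclideanSpace ℝ (Fin D))) ⁻¹'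
          {v : EuclideanSpace ℝ (Fin D) |
            ∃ x y, x ≠ y ∧ v = ‖H x - H y‖⁻¹ • (H x - H y)}) = ∅) := by
  set S : Set (EuclideanSpace ℝ (Fin D)) := {v : EuclideanSpace ℝ (Fin D) | ∃ x y, x ≠ y ∧ v = ‖H x - H y‖⁻¹ • (H x - H y)} with hS
  -- the secant map
  set g : EuclideanSpace ℝ (Fin n) × EuclideanSpace ℝ (Fin n) → EuclideanSpace ℝ (Fin D) := fun p => H p.1 - H p.2 with hg
  have hglip : LocallyLipschitz g := by
    exact (hlip.comp LipschitzWith.prod_fst.locallyLipschitz).sub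
      (hlip.comp LipschitzWith.prod_snd.locallyLipschitz)
  set f : EuclideanSpace ℝ (Fin D) → EuclideanSpace ℝ (Fin D) := fun u => ‖u‖⁻¹ • u with hf
  set Ω : Set (EuclideanSpace ℝ (Fin n) × EuclideanSpace ℝ (Fin n)) := {p | p.1 ≠ p.2} with hΩ
  have hSimg : S = (f ∘ g) '' Ω := by
    ext v
    constructor
    · rintro ⟨x, y, hxy, rfl⟩
      exact ⟨(x, y), hxy, rfl⟩
    · rintro ⟨⟨x, y⟩, hxy, rfl⟩
      exact ⟨x, y, hxy, rfl⟩
  -- Part 1 : dimH S ≤ 2n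
  have part1 : dimH S ≤ 2 * n := by
    have hdim : dimH ((f ∘ g) '' Ω) ≤ dimH Ω := by
      apply dimH_image_le_of_locally_lipschitzOn
      intro p hp
      have hgp : g p ≠ 0 := sub_ne_zero.2 fun h => hp (hinj h)
      -- f is C¹ at g p
      have hfc : ContDiffAt ℝ 1 f (g p) := by
        exact ((contDiffAt_norm ℝ hgp).inv (norm_ne_zero_iff.2 hgp)).smul contDiffAt_id
      obtain ⟨C, u, hu, hfu⟩ := hfc.exists_lipschitzOnWith
      obtain ⟨K, t, ht, hgt⟩ := hglip p
      refine ⟨C * K, t ∩ g ⁻¹' u, ?_, ?_⟩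
      · exact mem_nhdsWithin_of_mem_nhds (Filter.inter_mem ht
          (hglip.continuous.continuousAt.preimage_mem_nhds hu))
      · exact hfu.comp (hgt.mono inter_subset_left) (fun q hq => hq.2)
    calc dimH S = dimH ((f ∘ g) '' Ω) := by rw [hSimg]
      _ ≤ dimH Ω := hdim
      _ ≤ dimH (univ : Set (EuclideanSpace ℝ (Fin n) × EuclideanSpace ℝ (Fin n))) := dimH_mono (subset_univ _)
      _ = (finrank ℝ (EuclideanSpace ℝ (Fin n) × EuclideanSpace ℝ (Fin n)) : ℝ≥0∞) := Real.dimH_univ_eq_finrank _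
      _ = ((n + n : ℕ) : ℝ≥0∞) := by
          rw [finrank_prod, finrank_euclideanSpace_fin]
      _ = 2 * n := by push_cast; ring
  refine ⟨part1, fun hD => ?_⟩
  -- Part 2
  by_contra hne
  obtain ⟨v0, hv0⟩ := nonempty_iff_ne_empty.2 hne
  have hD1 : 1 ≤ D := by omega
  set v : EuclideanSpace ℝ (Fin D) := (v0 : EuclideanSpace ℝ (Fin D)) with hv
  have hvnorm : ‖v‖ = 1 := by
    exact mem_sphere_zero_iff_norm.1 v0.2
  have hvne : v ≠ 0 := by
    intro h; rw [h, norm_zero] at hvnorm; norm_num at hvnorm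
  set K : Submodule ℝ (EuclideanSpace ℝ (Fin D)) := (Submodule.span ℝ {v})ᗮ with hK
  haveI : Fact (finrank ℝ (EuclideanSpace ℝ (Fin D)) = (D - 1) + 1) := ⟨by
    rw [finrank_euclideanSpace_fin]; omega⟩
  have hKrank : finrank ℝ K = D - 1 := Submodule.finrank_orthogonal_span_singleton hvne
  set π := (Submodule.orthogonalProjectionOnto K : EuclideanSpace ℝ (Fin D) →L[ℝ] K) with hπ
  set σ : K → EuclideanSpace ℝ (Fin D) := fun w => (w : EuclideanSpace ℝ (Fin D)) + Real.sqrt (1 - ‖w‖ ^ 2) • v with hσ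
  have hσcont : Continuous σ := by
    apply Continuous.add continuous_subtype_val
    exact ((continuous_const.sub (continuous_norm.pow 2)).sqrt).smul continuous_const
  have hinner : ∀ (w : K) (c : ℝ), inner ℝ ((w : EuclideanSpace ℝ (Fin D))) (c • v) = (0 : ℝ) := by
    intro w c
    have hv' : c • v ∈ Submodule.span ℝ {v} :=
      Submodule.smul_mem _ _ (Submodule.mem_span_singleton_self v)
    exact Submodule.inner_left_of_mem_orthogonal hv' w.2
  have hσnorm : ∀ w : K, ‖w‖ ≤ 1 → ‖σ w‖ = 1 := by
    intro w hw
    have h1 : (0:ℝ) ≤ 1 - ‖w‖ ^ 2 := by nlinarith [hw, norm_nonneg w]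
    have : ‖σ w‖ ^ 2 = 1 := by
      rw [hσ]
      rw [norm_add_sq_real, hinner, norm_smul, Real.norm_eq_abs,
        abs_of_nonneg (Real.sqrt_nonneg _), hvnorm]
      rw [mul_pow, Real.sq_sqrt h1]
      have : ‖(w : EuclideanSpace ℝ (Fin D))‖ = ‖w‖ := rfl
      rw [this]; ring
    nlinarith [norm_nonneg (σ w)]
  have hπσ : ∀ w : K, π (σ w) = w := by
    intro w
    rw [hσ]
    simp only [map_add, map_smul]
    rw [Submodule.orthogonalProjectionOnto_mem_subspace_eq_self]
    have : π v = 0 := Submodule.orthogonalProjectionOnto_apply_of_mem_orthogonal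
      (Submodule.le_orthogonal_orthogonal _ (Submodule.mem_span_singleton_self v))
    rw [this, smul_zero, add_zero]
  have hσ0 : σ 0 = v := by
    simp [hσ]
  -- get an open set V in F with interior T = coe ⁻¹' V
  set T := ((fun v : Metric.sphere (0 : EuclideanSpace ℝ (Fin D)) 1 => (v : EuclideanSpace ℝ (Fin D))) ⁻¹' S) with hT
  obtain ⟨V, hVopen, hVeq⟩ := isOpen_induced_iff.1 (isOpen_interior (s := T))
  have hvV : v ∈ V := by
    have : v0 ∈ interior T := hv0
    rw [← hVeq] at this
    exact this
  set W : Set K := σ ⁻¹' V ∩ Metric.ball 0 1 with hW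
  have hWnhds : W ∈ nhds (0 : K) := by
    apply Filter.inter_mem
    · exact (hVopen.preimage hσcont).mem_nhds (by rw [Set.mem_preimage, hσ0]; exact hvV)
    · exact Metric.ball_mem_nhds _ one_pos
  have hWsub : W ⊆ π '' S := by
    rintro w ⟨hwV, hwb⟩
    have hwn : ‖w‖ < 1 := by simpa using hwb
    have hσw : ‖σ w‖ = 1 := hσnorm w hwn.le
    have hmem : (⟨σ w, by simpa [mem_sphere_iff_norm] using hσw⟩ :
        Metric.sphere (0 : EuclideanSpace ℝ (Fin D)) 1) ∈ interior T := by
      rw [← hVeq]; exact hwV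
    have h3 : σ w ∈ S := by
      have := interior_subset hmem
      rw [hT] at this
      exact this
    exact ⟨σ w, h3, hπσ w⟩
  have hdimW : dimH W = ((D - 1 : ℕ) : ℝ≥0∞) := by
    rw [Real.dimH_of_mem_nhds hWnhds, hKrank]
  have hchain : ((D - 1 : ℕ) : ℝ≥0∞) ≤ 2 * n := by
    calc ((D - 1 : ℕ) : ℝ≥0∞) = dimH W := hdimW.symm
      _ ≤ dimH (π '' S) := dimH_mono hWsub
      _ ≤ dimH S := π.lipschitz.dimH_image_le S
      _ ≤ 2 * n := part1
  have h2n : ((2 * n : ℕ) : ℝ≥0∞) < ((D - 1 : ℕ) : ℝ≥0∞) := by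
    exact_mod_cast hD
  have : ((2 * n : ℕ) : ℝ≥0∞) = 2 * n := by push_cast; ring
  rw [this] at h2n
  exact absurd (h2n.trans_le hchain) (lt_irrefl _)
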